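/- There exists a self-complementary graph on 12 vertices that has a K_7 minor; in particular, for n = 12 the upper bound ⌊3n/5⌋ = 7 on the Hadwiger number of a self-complementary graph is attained. -/

import Mathlib

/-- `G` has a complete minor of order `m`: there are `m` pairwise disjoint, nonempty,
connected branch sets with an edge of `G` between any two of them. -/
def HasCliqueMinor {V : Type*} (G : SimpleGraph V) (m : ℕ) : Prop :=
  ∃ B : Fin m → Set V,
    (∀ i, (B i).Nonempty) ∧
    (∀ i, (G.induce (B i)).Connected) ∧
    (Pairwise fun i j => Disjoint (B i) (B j)) ∧
    ∀ i j, i ≠ j → ∃ x ∈ B i, ∃ y ∈ B j, G.Adj x y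

/-- The Hadwiger number: the order of the largest complete minor. -/
noncomputable def hadwiger {V : Type*} (G : SimpleGraph V) : ℕ :=
  sSup {m | HasCliqueMinor G m}

/-- The 5-part construction: vertex set `R ⊕ Fin 4 × Fin q`, where parts
`0 = A`, `2 = C` carry `K_q`, parts `1 = B`, `3 = D` are edgeless, `R` carries `X`,
with complete joins `A–B`, `B–R`, `R–D`, `D–C`, `C–A`. -/
def fivePart {R : Type*} (X : SimpleGraph R) (q : ℕ) :
    SimpleGraph (R ⊕ Fin 4 × Fin q) :=
  SimpleGraph.fromRel (fun u v =>
    match u, v with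
    | Sum.inl x, Sum.inl y => X.Adj x y
    | Sum.inl _, Sum.inr (p, _) => p = 1 ∨ p = 3
    | Sum.inr (p, _), Sum.inl _ => p = 1 ∨ p = 3
    | Sum.inr (p, _), Sum.inr (p', _) =>
        (p = p' ∧ (p = 0 ∨ p = 2)) ∨
        (p = 0 ∧ p' = 1) ∨ (p = 2 ∧ p' = 0) ∨ (p = 3 ∧ p' = 2))

/-- Adjacency of our 12-vertex self-complementary graph: `i ~ i + d` for
`d ∈ {1,2,3}` when `i` is even, and for `d ∈ {4,5,6}` when `i` is odd. -/
def gadj (i j : Fin 12) : Prop :=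
  (((j - i).val = 1 ∨ (j - i).val = 2 ∨ (j - i).val = 3) ∧ i.val % 2 = 0) ∨
  (((j - i).val = 4 ∨ (j - i).val = 5 ∨ (j - i).val = 6) ∧ i.val % 2 = 1) ∨
  (((i - j).val = 1 ∨ (i - j).val = 2 ∨ (i - j).val = 3) ∧ j.val % 2 = 0) ∨
  (((i - j).val = 4 ∨ (i - j).val = 5 ∨ (i - j).val = 6) ∧ j.val % 2 = 1)

instance : DecidableRel gadj := fun i j => by unfold gadj; infer_instance

/-- The self-complementary graph on 12 vertices. -/
def G12 : SimpleGraph (Fin 12) where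
  Adj := gadj
  symm := ⟨fun a b => by revert a b; decide⟩
  loopless := ⟨fun a => by revert a; decide⟩

instance : DecidableRel G12.Adj := fun i j => by
  show Decidable (gadj i j); infer_instance

/-- The branch sets of a `K₇` minor of `G12`. -/
def F7 : Fin 7 → Finset (Fin 12) :=
  ![{0, 2}, {1, 7}, {3, 11}, {4, 6}, {5}, {8, 10}, {9}]

lemma singletonConn {V : Type*} (G : SimpleGraph V) (x : V) :
    (G.induce ({x} : Set V)).Connected := by
  haveI : Nonempty ({x} : Set V) := ⟨⟨x, rfl⟩⟩
  refine ⟨fun a b => ?_⟩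
  have ha := a.2; have hb := b.2
  simp only [Set.mem_singleton_iff] at ha hb
  have : a = b := Subtype.ext (ha.trans hb.symm)
  exact this ▸ SimpleGraph.Reachable.refl _

lemma pairConn (x y : Fin 12) (h : G12.Adj x y) :
    (G12.induce (↑({x, y} : Finset (Fin 12)))).Connected := by
  rw [show (↑({x, y} : Finset (Fin 12)) : Set (Fin 12)) = {x, y} by simp]
  exact SimpleGraph.induce_pair_connected_of_adj h

lemma singConn (x : Fin 12) :
    (G12.induce (↑({x} : Finset (Fin 12)))).Connected := by
  rw [Finset.coe_singleton]
  exact singletonConn G12 x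

theorem stmt11 :
    ∃ G : SimpleGraph (Fin 12), Nonempty (G ≃g Gᶜ) ∧ HasCliqueMinor G 7 := by
  refine ⟨G12, ⟨⟨Equiv.addRight (1 : Fin 12), ?_⟩⟩, ?_⟩
  · intro a b
    show G12ᶜ.Adj _ _ ↔ G12.Adj a b
    revert a b; decide
  · refine ⟨fun i => ↑(F7 i), ?_, ?_, ?_, ?_⟩
    · intro i
      rw [Finset.coe_nonempty]
      revert i; decide
    · intro i
      fin_cases i
      · exact pairConn 0 2 (by decide)
      · exact pairConn 1 7 (by decide)
      · exact pairConn 3 11 (by decide)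
      · exact pairConn 4 6 (by decide)
      · exact singConn 5
      · exact pairConn 8 10 (by decide)
      · exact singConn 9
    · have h : ∀ i j : Fin 7, i ≠ j → Disjoint (F7 i) (F7 j) := by decide
      intro i j hij
      rw [Finset.disjoint_coe]
      exact h i j hij
    · have h : ∀ i j : Fin 7, i ≠ j → ∃ x ∈ F7 i, ∃ y ∈ F7 j, G12.Adj x y := by decide
      intro i j hij
      simpa using h i j hij
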